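/- Let c, s, L, E, I > 0 and a > 0 with a ≠ 8 and a ≠ 16 be reals, let x₀ ∈ [0,1), and let P ≥ 1 be an integer. Then Σ_{i=1}^P (a^{i−1}/(E·I)) ∫_0^{L·2^{1−i}} (H_i − s·x)·(1 − 2ρ_i(x₀)) · c·2^{−i}·(L·2^{1−i} − x) dx = (4·c·s·L³/(E·I)) · ( (5 − 5(a/16)^P)/(48 − 3a) − (10/(3a))·C_{P,a/16}(x₀) − ((1/2)^P − (a/16)^P)/(8 − a) + (1/(2^{P−1}·a))·C_{P,a/8}(x₀) ), where H_i = s·L·(2^{2−i} − 2^{1−P}). -/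

import Mathlib

/-- The `k`-th binary digit of `x ∈ [0,1)`: ρ_k(x) = ⌊2^k x⌋ − 2⌊2^{k−1} x⌋. -/
noncomputable def binDigit (k : ℕ) (x : ℝ) : ℤ := ⌊(2:ℝ) ^ k * x⌋ - 2 * ⌊(2:ℝ) ^ (k - 1) * x⌋

/-- The partial sum C_{P,t}(x) = Σ_{k=1}^P ρ_k(x) t^k. -/
noncomputable def Cpart (P : ℕ) (t x : ℝ) : ℝ :=
  ∑ k ∈ Finset.Icc 1 P, (binDigit k x : ℝ) * t ^ k

lemma integ (A u B c' ℓ : ℝ) :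
    ∫ x in (0:ℝ)..ℓ, (A - u*x)*B*(c'*(ℓ - x)) = B*c'*(A*ℓ^2/2 - u*ℓ^3/6) := by
  have h : (∫ x in (0:ℝ)..ℓ, (A - u*x)*B*(c'*(ℓ - x)))
      = ∫ x in (0:ℝ)..ℓ, ((B*c'*A*ℓ) - (B*c'*(A + u*ℓ))*x + (B*c'*u)*x^2) := by
    congr 1; ext x; ring
  rw [h, intervalIntegral.integral_add, intervalIntegral.integral_sub,
    intervalIntegral.integral_const, intervalIntegral.integral_const_mul,
    intervalIntegral.integral_const_mul, integral_id, integral_pow]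
  · push_cast [smul_eq_mul]; ring
  · exact (continuous_const).intervalIntegrable _ _
  · exact (continuous_const.mul continuous_id).intervalIntegrable _ _
  · exact ((continuous_const).sub (continuous_const.mul continuous_id)).intervalIntegrable _ _
  · exact (continuous_const.mul (continuous_pow 2)).intervalIntegrable _ _

set_option maxHeartbeats 2000000 in
/-- Bending-moment term of the PVW for the horizontal displacement of the end node at
`x₀` in a binary tree structure with `P` levels, for `a ≠ 8`, `a ≠ 16`. -/
theorem horizontal_bending_term (c s L E I a : ℝ) (hc : 0 < c) (hs : 0 < s) (hL : 0 < L)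
    (hE : 0 < E) (hI : 0 < I) (ha : 0 < a) (ha8 : a ≠ 8) (ha16 : a ≠ 16)
    (x₀ : ℝ) (hx₀ : x₀ ∈ Set.Ico (0:ℝ) 1) (P : ℕ) (hP : 1 ≤ P) :
    ∑ i ∈ Finset.Icc 1 P, (a ^ (i - 1) / (E * I)) *
      ∫ x in (0:ℝ)..(L * 2 ^ ((1:ℤ) - (i:ℤ))),
        (s * L * (2 ^ ((2:ℤ) - (i:ℤ)) - 2 ^ ((1:ℤ) - (P:ℤ))) - s * x) *
          (1 - 2 * (binDigit i x₀ : ℝ)) *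
          (c * 2 ^ (-(i:ℤ)) * (L * 2 ^ ((1:ℤ) - (i:ℤ)) - x)) =
    (4 * c * s * L ^ 3 / (E * I)) *
      ((5 - 5 * (a / 16) ^ P) / (48 - 3 * a) - (10 / (3 * a)) * Cpart P (a / 16) x₀ -
        ((1 / 2) ^ P - (a / 16) ^ P) / (8 - a) +
        (1 / (2 ^ ((P:ℤ) - 1) * a)) * Cpart P (a / 8) x₀) := by
  have hE' : E ≠ 0 := hE.ne'
  have hI' : I ≠ 0 := hI.ne'
  have ha' : a ≠ 0 := ha.ne'
  have h2 : (2:ℝ) ≠ 0 := two_ne_zero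
  set K : ℝ := 4 * c * s * L ^ 3 / (E * I) with hK
  have h4 : (2:ℝ)^((1:ℤ)-(P:ℤ)) = 2 / 2^P := by
    rw [zpow_sub₀ h2, zpow_one, zpow_natCast]
  have step1 : ∀ i ∈ Finset.Icc 1 P, (a ^ (i - 1) / (E * I)) *
      (∫ x in (0:ℝ)..(L * 2 ^ ((1:ℤ) - (i:ℤ))),
        (s * L * (2 ^ ((2:ℤ) - (i:ℤ)) - 2 ^ ((1:ℤ) - (P:ℤ))) - s * x) *
          (1 - 2 * (binDigit i x₀ : ℝ)) *
          (c * 2 ^ (-(i:ℤ)) * (L * 2 ^ ((1:ℤ) - (i:ℤ)) - x))) =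
      K * ((5/(3*a)) * (a/16)^i - ((1/2)^P / a) * (a/8)^i) * (1 - 2*(binDigit i x₀:ℝ)) := by
    intro i hi
    have hi1 : 1 ≤ i := (Finset.mem_Icc.mp hi).1
    rw [integ]
    have h1 : (2:ℝ)^((1:ℤ)-(i:ℤ)) = 2 / 2^i := by
      rw [zpow_sub₀ h2, zpow_one, zpow_natCast]
    have h2i : (2:ℝ)^((2:ℤ)-(i:ℤ)) = 4 / 2^i := by
      rw [zpow_sub₀ h2, zpow_natCast]; norm_num
    have h3 : (2:ℝ)^(-(i:ℤ)) = 1 / 2^i := by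
      rw [zpow_neg, zpow_natCast, one_div]
    have h5 : a ^ (i-1) = a^i / a := by
      rw [pow_sub₀ a ha' hi1, pow_one, div_eq_mul_inv]
    have h16 : ((16:ℝ))^i = ((2:ℝ)^i)^4 := by
      rw [show (16:ℝ) = 2^4 by norm_num, ← pow_mul, ← pow_mul, mul_comm]
    have h8 : ((8:ℝ))^i = ((2:ℝ)^i)^3 := by
      rw [show (8:ℝ) = 2^3 by norm_num, ← pow_mul, ← pow_mul, mul_comm]
    have h2i0 : (2:ℝ)^i ≠ 0 := pow_ne_zero _ h2
    have h2P0 : (2:ℝ)^P ≠ 0 := pow_ne_zero _ h2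
    rw [h1, h2i, h3, h4, h5, hK]
    simp only [div_pow, one_pow, h16, h8]
    field_simp
    ring
  rw [Finset.sum_congr rfl step1]
  have step2 : ∀ i ∈ Finset.Icc 1 P,
      K * ((5/(3*a)) * (a/16)^i - ((1/2)^P / a) * (a/8)^i) * (1 - 2*(binDigit i x₀:ℝ)) =
      (K*5/(3*a)) * (a/16)^i - (K*(1/2)^P/a) * (a/8)^i
        - (2*K*5/(3*a)) * ((binDigit i x₀:ℝ)*(a/16)^i)
        + (2*K*(1/2)^P/a) * ((binDigit i x₀:ℝ)*(a/8)^i) := by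
    intro i _; ring
  rw [Finset.sum_congr rfl step2]
  simp only [Finset.sum_add_distrib, Finset.sum_sub_distrib, ← Finset.mul_sum]
  have h16ne : (a/16 : ℝ) ≠ 1 := fun h => ha16 (by field_simp at h; linarith)
  have h8ne : (a/8 : ℝ) ≠ 1 := fun h => ha8 (by field_simp at h; linarith)
  have hle : 1 ≤ P + 1 := by omega
  have hd16 : (a:ℝ) - 16 ≠ 0 := sub_ne_zero.mpr ha16
  have hd8' : (a:ℝ) - 8 ≠ 0 := sub_ne_zero.mpr ha8
  have hdd1 : (a/16:ℝ) - 1 ≠ 0 := sub_ne_zero.mpr h16ne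
  have hdd2 : (a/8:ℝ) - 1 ≠ 0 := sub_ne_zero.mpr h8ne
  have g1 : ∑ i ∈ Finset.Icc 1 P, (a/16:ℝ)^i = a*((a/16)^P - 1)/(a - 16) := by
    rw [← Finset.Ico_add_one_right_eq_Icc, geom_sum_Ico h16ne hle, pow_one, pow_succ]
    field_simp
  have g2 : ∑ i ∈ Finset.Icc 1 P, (a/8:ℝ)^i = a*((a/8)^P - 1)/(a - 8) := by
    rw [← Finset.Ico_add_one_right_eq_Icc, geom_sum_Ico h8ne hle, pow_one, pow_succ]
    field_simp
  rw [g1, g2]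
  simp only [Cpart]
  have hC1 := Cpart P (a/16) x₀
  set C1 : ℝ := ∑ k ∈ Finset.Icc 1 P, (binDigit k x₀:ℝ) * (a/16)^k with hC1d
  set C2 : ℝ := ∑ k ∈ Finset.Icc 1 P, (binDigit k x₀:ℝ) * (a/8)^k with hC2d
  have hXYZ : (a/16:ℝ)^P = (1/2)^P * (a/8)^P := by
    rw [← mul_pow, show (1/2:ℝ)*(a/8) = a/16 by ring]
  have hZP : ((1:ℝ)/2)^P = 1/2^P := by rw [div_pow, one_pow]
  have hPm1 : (2:ℝ)^((P:ℤ)-1) = 2^P / 2 := by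
    rw [zpow_sub₀ h2, zpow_one, zpow_natCast]
  have h8P : ((8:ℝ))^P = ((2:ℝ)^P)^3 := by
    rw [show (8:ℝ) = 2^3 by norm_num, ← pow_mul, ← pow_mul, mul_comm]
  have h2P0 : (2:ℝ)^P ≠ 0 := pow_ne_zero _ h2
  have hd1 : (a/16:ℝ) - 1 ≠ 0 := sub_ne_zero.mpr h16ne
  have hd2 : (a/8:ℝ) - 1 ≠ 0 := sub_ne_zero.mpr h8ne
  have hd3 : (48:ℝ) - 3*a ≠ 0 := fun h => ha16 (by linarith)
  have hd4 : (8:ℝ) - a ≠ 0 := fun h => ha8 (by linarith)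
  rw [hXYZ, hZP, hPm1, div_pow, h8P]
  field_simp
  ring
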